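/- arXiv:1608.05497 — 3 statements merged into one kernel-verified Lean document; each statement's English description precedes it below -/
import Mathlib

section
/- Let F : ℝⁿ → ℝⁿ (as a map between Euclidean spaces) be twice continuously differentiable at x, let u_0, …, u_N ∈ ℝⁿ and real weights W_0, …, W_N with Σ_i W_i = 1 be fixed. For ε ∈ ℝ define Y_i(ε) = F(x + ε·u_i), Ỹ_i(ε) = F(x) + ε·(fderiv ℝ F x) u_i, their weighted means Ŷ(ε) = Σ_i W_i Y_i(ε) and Ỹ(ε) = Σ_i W_i Ỹ_i(ε), and the covariance matrices P(ε) = Σ_i W_i·(Y_i(ε) − Ŷ(ε))(Y_i(ε) − Ŷ(ε))ᵀ and P̃(ε) = Σ_i W_i·(Ỹ_i(ε) − Ỹ(ε))(Ỹ_i(ε) − Ỹ(ε))ᵀ. Then the covariance error P(ε) − P̃(ε) is little-o of ε ↦ ε² as ε → 0. -/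
open Asymptotics Filter Matrix

attribute [local instance] Matrix.normedAddCommGroup Matrix.normedSpace

theorem spukf_covariance_error_little_o
    (n N : ℕ) (F : EuclideanSpace ℝ (Fin n) → EuclideanSpace ℝ (Fin n))
    (x : EuclideanSpace ℝ (Fin n)) (hF : ContDiffAt ℝ 2 F x)
    (u : Fin (N + 1) → EuclideanSpace ℝ (Fin n))
    (W : Fin (N + 1) → ℝ) (hW : ∑ i, W i = 1)
    (Y Ytilde : Fin (N + 1) → ℝ → EuclideanSpace ℝ (Fin n))
    (hY : ∀ i ε, Y i ε = F (x + ε • u i))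
    (hYt : ∀ i ε, Ytilde i ε = F x + ε • fderiv ℝ F x (u i))
    (Yhat Ytildehat : ℝ → EuclideanSpace ℝ (Fin n))
    (hYhat : ∀ ε, Yhat ε = ∑ i, W i • Y i ε)
    (hYtildehat : ∀ ε, Ytildehat ε = ∑ i, W i • Ytilde i ε)
    (P Ptilde : ℝ → Matrix (Fin n) (Fin n) ℝ)
    (hP : ∀ ε, P ε = ∑ i, W i •
      vecMulVec (fun j => (Y i ε - Yhat ε) j) (fun j => (Y i ε - Yhat ε) j))
    (hPt : ∀ ε, Ptilde ε = ∑ i, W i •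
      vecMulVec (fun j => (Ytilde i ε - Ytildehat ε) j)
        (fun j => (Ytilde i ε - Ytildehat ε) j)) :
    (fun ε : ℝ => P ε - Ptilde ε) =o[nhds 0] (fun ε : ℝ => ε ^ 2) := by
  have hdiff : DifferentiableAt ℝ F x := hF.differentiableAt (by norm_num)
  have hfd : HasFDerivAt F (fderiv ℝ F x) x := hdiff.hasFDerivAt
  -- residuals are o(ε)
  have hs : ∀ i, (fun ε : ℝ => Y i ε - Ytilde i ε) =o[nhds 0] (fun ε : ℝ => ε) := by
    intro i
    have hg : HasDerivAt (fun ε : ℝ => x + ε • u i) (u i) 0 := by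
      simpa using ((hasDerivAt_id (0 : ℝ)).smul_const (u i)).const_add x
    have hfd' : HasFDerivAt F (fderiv ℝ F x) ((fun ε : ℝ => x + ε • u i) 0) := by
      simpa using hfd
    have hc : HasDerivAt (fun ε : ℝ => F (x + ε • u i)) ((fderiv ℝ F x) (u i)) 0 :=
      hfd'.comp_hasDerivAt 0 hg
    have := (hasDerivAt_iff_isLittleO).1 hc
    refine this.congr (fun ε => ?_) (fun ε => by simp)
    simp [hY, hYt]
    abel
  -- combined residual (Y i - Yhat) - (Ytilde i - Ytildehat) is o(ε)
  have hS : ∀ i, (fun ε : ℝ => (Y i ε - Yhat ε) - (Ytilde i ε - Ytildehat ε))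
      =o[nhds 0] (fun ε : ℝ => ε) := by
    intro i
    have hsum : (fun ε : ℝ => Yhat ε - Ytildehat ε) =o[nhds 0] (fun ε : ℝ => ε) := by
      have : (fun ε : ℝ => ∑ k, W k • (Y k ε - Ytilde k ε)) =o[nhds 0] (fun ε : ℝ => ε) := by
        refine IsLittleO.fun_sum fun k _ => (hs k).const_smul_left (W k)
      refine this.congr (fun ε => ?_) (fun ε => rfl)
      simp [hYhat, hYtildehat, smul_sub, Finset.sum_sub_distrib]
    have := (hs i).sub hsum
    refine this.congr (fun ε => ?_) (fun ε => rfl)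
    abel
  -- linear part is O(ε)
  have hB : ∀ i, (fun ε : ℝ => Ytilde i ε - Ytildehat ε) =O[nhds 0] (fun ε : ℝ => ε) := by
    intro i
    have hval : ∀ ε : ℝ, Ytilde i ε - Ytildehat ε
        = ε • ((fderiv ℝ F x) (u i) - ∑ k, W k • (fderiv ℝ F x) (u k)) := by
      intro ε
      have : Ytildehat ε = F x + ε • ∑ k, W k • (fderiv ℝ F x) (u k) := by
        rw [hYtildehat]
        simp only [hYt, smul_add]
        rw [Finset.sum_add_distrib, ← Finset.sum_smul, hW, one_smul, Finset.smul_sum]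
        congr 1
        refine Finset.sum_congr rfl fun k _ => ?_
        rw [smul_comm]
      rw [hYt, this, smul_sub]
      abel
    rw [isBigO_iff]
    refine ⟨‖(fderiv ℝ F x) (u i) - ∑ k, W k • (fderiv ℝ F x) (u k)‖, ?_⟩
    filter_upwards with ε
    rw [hval, norm_smul]
    rw [Real.norm_eq_abs]
    ring_nf
    rw [mul_comm]
  -- reduce to entries
  refine isLittleO_pi.2 ?_
  intro j
  rw [isLittleO_pi]
  intro k
  have hentry : ∀ ε : ℝ, (P ε - Ptilde ε) j k
      = ∑ i, W i * (((Y i ε - Yhat ε) j) * ((Y i ε - Yhat ε) k)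
          - ((Ytilde i ε - Ytildehat ε) j) * ((Ytilde i ε - Ytildehat ε) k)) := by
    intro ε
    simp only [hP, hPt, Matrix.sub_apply, Matrix.sum_apply, Matrix.smul_apply,
      vecMulVec_apply, smul_eq_mul, mul_sub, Finset.sum_sub_distrib]
  have main : (fun ε : ℝ => ∑ i, W i * (((Y i ε - Yhat ε) j) * ((Y i ε - Yhat ε) k)
          - ((Ytilde i ε - Ytildehat ε) j) * ((Ytilde i ε - Ytildehat ε) k)))
      =o[nhds 0] (fun ε : ℝ => ε ^ 2) := by
    refine IsLittleO.fun_sum fun i _ => ?_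
    set s : ℝ → EuclideanSpace ℝ (Fin n) :=
      fun ε => (Y i ε - Yhat ε) - (Ytilde i ε - Ytildehat ε) with hsdef
    set b : ℝ → EuclideanSpace ℝ (Fin n) := fun ε => Ytilde i ε - Ytildehat ε with hbdef
    have hsj : ∀ m : Fin n, (fun ε : ℝ => s ε m) =o[nhds 0] (fun ε : ℝ => ε) :=
      fun m => ((EuclideanSpace.proj m : EuclideanSpace ℝ (Fin n) →L[ℝ] ℝ).isBigO_comp
        s (nhds 0)).trans_isLittleO (hS i)
    have hbj : ∀ m : Fin n, (fun ε : ℝ => b ε m) =O[nhds 0] (fun ε : ℝ => ε) :=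
      fun m => ((EuclideanSpace.proj m : EuclideanSpace ℝ (Fin n) →L[ℝ] ℝ).isBigO_comp
        b (nhds 0)).trans (hB i)
    have t1 := (hsj j).mul_isBigO (hbj k)
    have t2 := (hbj j).mul_isLittleO (hsj k)
    have t3 := (hsj j).mul (hsj k)
    have := (((t1.add t2).add t3).const_mul_left (W i))
    refine this.congr (fun ε => ?_) (fun ε => by ring)
    have haj : (Y i ε - Yhat ε) j = b ε j + s ε j := by simp [hsdef, hbdef]
    have hak : (Y i ε - Yhat ε) k = b ε k + s ε k := by simp [hsdef, hbdef]
    rw [haj, hak]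
    ring
  exact main.congr (fun ε => (hentry ε).symm) (fun ε => rfl)
end

section
/- Let F : ℝⁿ → ℝⁿ be twice continuously differentiable at x and h : ℝⁿ → ℝᵐ continuously differentiable at F(x) (maps between Euclidean spaces), let u_0, …, u_N ∈ ℝⁿ and real weights W_0, …, W_N be fixed. Define ē_z(ε) = Σ_{i=0}^{N} W_i·[h(F(x + ε·u_i)) − h(F(x) + ε·(fderiv ℝ F x) u_i)]. Then ē_z is big-O of ε ↦ ε² as ε → 0. -/
open Asymptotics Filter

private lemma taylor1_isBigO {E : Type*} [NormedAddCommGroup E] [NormedSpace ℝ E]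
    {f : ℝ → E} {d : E} (hf : ContDiffAt ℝ 2 f 0) (hd : HasDerivAt f d 0) :
    (fun ε : ℝ => f ε - f 0 - ε • d) =O[nhds 0] (fun ε : ℝ => ε ^ 2) := by
  have hf' : ContDiffAt ℝ 1 (fderiv ℝ f) 0 := hf.fderiv_right (le_refl _)
  obtain ⟨K, t, htm, hlip⟩ := hf'.exists_lipschitzOnWith
  obtain ⟨s, hsm, hso⟩ := hf.contDiffOn (m := 1) one_le_two (by simp)
  obtain ⟨δ, hδ, hball⟩ := Metric.mem_nhds_iff.1 (Filter.inter_mem htm hsm)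
  -- interior of s version: we need differentiability at points of ball
  have hdiff : ∀ y ∈ Metric.ball (0:ℝ) δ, DifferentiableAt ℝ f y := by
    intro y hy
    have : ContDiffAt ℝ 1 f y := by
      have hb : Metric.ball (0:ℝ) δ ∈ nhds y := Metric.isOpen_ball.mem_nhds hy
      exact (hso.mono (fun z hz => (hball hz).2)).contDiffAt hb
    exact this.differentiableAt one_ne_zero
  have hde : fderiv ℝ f 0 = ContinuousLinearMap.smulRight (1 : ℝ →L[ℝ] ℝ) d :=
    hd.hasFDerivAt.fderiv
  rw [Asymptotics.isBigO_iff]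
  refine ⟨K, ?_⟩
  have hev : ∀ᶠ ε : ℝ in nhds 0, |ε| < δ := by
    have : Metric.ball (0:ℝ) δ ∈ nhds 0 := Metric.ball_mem_nhds _ hδ
    filter_upwards [this] with ε hε
    simpa [Real.dist_eq] using hε
  filter_upwards [hev] with ε hε
  have habs : ∀ z ∈ segment ℝ (0:ℝ) ε, |z| ≤ |ε| := by
    intro z hz
    rw [segment_eq_image] at hz
    obtain ⟨θ, hθ, rfl⟩ := hz
    simp only [Set.mem_Icc] at hθ
    show |(1 - θ) • (0:ℝ) + θ • ε| ≤ |ε|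
    have : (1 - θ) • (0:ℝ) + θ • ε = θ * ε := by
      simp [smul_eq_mul]
    rw [this, abs_mul, abs_of_nonneg hθ.1]
    nlinarith [abs_nonneg ε]
  have hseg : segment ℝ (0:ℝ) ε ⊆ Metric.ball (0:ℝ) δ := by
    intro z hz
    simpa [Real.dist_eq] using lt_of_le_of_lt (habs z hz) hε
  have key : ‖f ε - f 0 - (fderiv ℝ f 0) (ε - 0)‖ ≤ (K * |ε|) * ‖ε - 0‖ := by
    apply Convex.norm_image_sub_le_of_norm_fderiv_le' (φ := fderiv ℝ f 0)
      (fun y hy => hdiff y (hseg hy))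
      (fun y hy => ?_) (convex_segment _ _) (left_mem_segment _ _ _) (right_mem_segment _ _ _)
    have h1 : dist (fderiv ℝ f y) (fderiv ℝ f 0) ≤ K * dist y 0 := by
      apply hlip.dist_le_mul
      · exact (hball (hseg hy)).1
      · exact (hball (Metric.mem_ball_self hδ)).1
    have h2 : |y| ≤ |ε| := habs y hy
    rw [dist_eq_norm, Real.dist_eq, sub_zero] at h1
    calc ‖fderiv ℝ f y - fderiv ℝ f 0‖ ≤ K * |y| := h1
      _ ≤ K * |ε| := by gcongr
  have happ : (fderiv ℝ f 0) (ε - 0) = ε • d := by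
    rw [hde]; simp
  rw [happ] at key
  calc ‖f ε - f 0 - ε • d‖ ≤ (K * |ε|) * ‖ε - 0‖ := key
    _ = K * ‖ε ^ 2‖ := by
        rw [sub_zero, Real.norm_eq_abs, Real.norm_eq_abs, abs_pow]
        ring

theorem spukf_predicted_measurement_error_second_order
    (n m N : ℕ) (F : EuclideanSpace ℝ (Fin n) → EuclideanSpace ℝ (Fin n))
    (h : EuclideanSpace ℝ (Fin n) → EuclideanSpace ℝ (Fin m))
    (x : EuclideanSpace ℝ (Fin n))
    (hF : ContDiffAt ℝ 2 F x) (hh : ContDiffAt ℝ 1 h (F x))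
    (u : Fin (N + 1) → EuclideanSpace ℝ (Fin n)) (W : Fin (N + 1) → ℝ) :
    (fun ε : ℝ =>
        ∑ i, W i • (h (F (x + ε • u i)) - h (F x + ε • fderiv ℝ F x (u i))))
      =O[nhds 0] (fun ε : ℝ => ε ^ 2) := by
  have hterm : ∀ i : Fin (N + 1),
      (fun ε : ℝ => W i • (h (F (x + ε • u i)) - h (F x + ε • fderiv ℝ F x (u i))))
        =O[nhds 0] (fun ε : ℝ => ε ^ 2) := by
    intro i
    refine Asymptotics.IsBigO.const_smul_left (f' := fun ε : ℝ => h (F (x + ε • u i)) - h (F x + ε • fderiv ℝ F x (u i))) ?_ (W i)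
    -- set up the two curves
    set a : ℝ → EuclideanSpace ℝ (Fin n) := fun ε => F (x + ε • u i) with ha
    set b : ℝ → EuclideanSpace ℝ (Fin n) := fun ε => F x + ε • fderiv ℝ F x (u i) with hb
    -- line is smooth
    have hline : ContDiff ℝ 2 (fun ε : ℝ => x + ε • u i) :=
      contDiff_const.add (contDiff_id.smul contDiff_const)
    have hFdiff : DifferentiableAt ℝ F x := hF.differentiableAt (by norm_num)
    have hlinederiv : HasDerivAt (fun ε : ℝ => x + ε • u i) (u i) 0 := by
      simpa using ((hasDerivAt_id (0:ℝ)).smul_const (u i)).const_add x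
    have haC : ContDiffAt ℝ 2 a 0 := by
      apply ContDiffAt.comp
      · simpa using hF
      · exact hline.contDiffAt
    have haderiv : HasDerivAt a (fderiv ℝ F x (u i)) 0 := by
      have := ((by simpa using hFdiff.hasFDerivAt :
        HasFDerivAt F (fderiv ℝ F x) (x + (0:ℝ) • u i)).comp_hasDerivAt 0 hlinederiv)
      exact this
    have hdiffO : (fun ε : ℝ => a ε - b ε) =O[nhds 0] (fun ε : ℝ => ε ^ 2) := by
      have := taylor1_isBigO haC haderiv
      have ha0 : a 0 = F x := by simp [ha]
      simpa [hb, ha0, sub_sub] using this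
    -- h is Lipschitz near F x
    obtain ⟨K, t, htm, hlip⟩ := hh.exists_lipschitzOnWith
    have hacont : ContinuousAt a 0 := haC.continuousAt
    have hbcont : ContinuousAt b 0 := by
      apply Continuous.continuousAt
      exact continuous_const.add (continuous_id.smul continuous_const)
    have ha0 : a 0 = F x := by simp [ha]
    have hb0 : b 0 = F x := by simp [hb]
    have hevta : ∀ᶠ ε : ℝ in nhds 0, a ε ∈ t := hacont (by rwa [ha0])
    have hevtb : ∀ᶠ ε : ℝ in nhds 0, b ε ∈ t := hbcont (by rwa [hb0])
    have hO : (fun ε : ℝ => h (a ε) - h (b ε)) =O[nhds 0] (fun ε : ℝ => a ε - b ε) := by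
      rw [Asymptotics.isBigO_iff]
      refine ⟨K, ?_⟩
      filter_upwards [hevta, hevtb] with ε h1 h2
      have := hlip.dist_le_mul _ h1 _ h2
      rw [dist_eq_norm, dist_eq_norm] at this
      exact this
    exact hO.trans hdiffO
  exact (Asymptotics.IsBigO.sum (s := Finset.univ) (fun i _ => hterm i)).congr_left (fun ε => Finset.sum_apply _ _ _)
end

section
/- Let F : ℝⁿ → ℝⁿ be twice continuously differentiable at x and h : ℝⁿ → ℝᵐ continuously differentiable at F(x), let u_0, …, u_N ∈ ℝⁿ and real weights W_0, …, W_N with Σ_i W_i = 1 be fixed. For ε ∈ ℝ define exact sigma points Y_i(ε) = F(x + ε·u_i) with measurements Z_i(ε) = h(Y_i(ε)), approximate sigma points Ỹ_i(ε) = F(x) + ε·(fderiv ℝ F x) u_i with measurements Z̃_i(ε) = h(Ỹ_i(ε)), weighted means Ŷ, Ẑ, Ỹ, Z̃ of these families, and cross-covariances P_{YZ}(ε) = Σ_i W_i·(Y_i − Ŷ)(Z_i − Ẑ)ᵀ and P̃_{YZ}(ε) = Σ_i W_i·(Ỹ_i − Ỹ)(Z̃_i − Z̃)ᵀ (weighted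 sums of outer-product matrices). Then P_{YZ}(ε) − P̃_{YZ}(ε) is little-o of ε ↦ ε² as ε → 0. -/
open Asymptotics Filter Matrix

attribute [local instance] Matrix.normedAddCommGroup Matrix.normedSpace

private lemma coord_abs_le_norm {n : ℕ} (a : EuclideanSpace ℝ (Fin n)) (j : Fin n) :
    |a j| ≤ ‖a‖ := by
  rw [EuclideanSpace.norm_eq]
  have h1 : |a j| = Real.sqrt (‖a j‖ ^ 2) := by
    rw [Real.sqrt_sq_eq_abs, abs_norm, Real.norm_eq_abs]
  rw [h1]
  exact Real.sqrt_le_sqrt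
    (Finset.single_le_sum (f := fun i => ‖a i‖ ^ 2) (fun i _ => sq_nonneg _)
      (Finset.mem_univ j))

private lemma norm_vecMulVec_le {n m : ℕ} (a : EuclideanSpace ℝ (Fin n))
    (b : EuclideanSpace ℝ (Fin m)) :
    ‖vecMulVec (fun j => a j) (fun k => b k)‖ ≤ ‖a‖ * ‖b‖ := by
  rw [Matrix.norm_le_iff (mul_nonneg (norm_nonneg _) (norm_nonneg _))]
  intro i j
  rw [vecMulVec_apply, Real.norm_eq_abs, abs_mul]
  exact mul_le_mul (coord_abs_le_norm a i) (coord_abs_le_norm b j)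
    (abs_nonneg _) (norm_nonneg _)

private lemma vecMulVec_isLittleO {n m : ℕ} {f : ℝ → EuclideanSpace ℝ (Fin n)}
    {g : ℝ → EuclideanSpace ℝ (Fin m)}
    (hfg : (fun ε => ‖f ε‖ * ‖g ε‖) =o[nhds 0] fun ε : ℝ => ε ^ 2) :
    (fun ε => vecMulVec (fun j => f ε j) (fun k => g ε k)) =o[nhds 0]
      fun ε : ℝ => ε ^ 2 := by
  refine IsBigO.trans_isLittleO ?_ hfg
  refine isBigO_iff.mpr ⟨1, Eventually.of_forall fun ε => ?_⟩
  rw [one_mul, Real.norm_eq_abs, abs_of_nonneg (by positivity)]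
  exact norm_vecMulVec_le _ _

private lemma weighted_mean_sub {N : ℕ} {E : Type*} [AddCommGroup E] [Module ℝ E]
    (W : Fin (N + 1) → ℝ) (hW : ∑ i, W i = 1) (v : Fin (N + 1) → E) (c : E) :
    ∑ i, W i • v i - c = ∑ i, W i • (v i - c) := by
  simp [smul_sub, Finset.sum_sub_distrib, ← Finset.sum_smul, hW]

private lemma smul_isBigO' {E : Type*} [NormedAddCommGroup E] [NormedSpace ℝ E] (v : E) :
    (fun ε : ℝ => ε • v) =O[nhds 0] fun ε : ℝ => ε :=
  isBigO_iff.mpr ⟨‖v‖, Eventually.of_forall fun ε => by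
    rw [norm_smul]; exact le_of_eq (mul_comm _ _)⟩

theorem spukf_cross_covariance_error_little_o
    (n m N : ℕ) (F : EuclideanSpace ℝ (Fin n) → EuclideanSpace ℝ (Fin n))
    (h : EuclideanSpace ℝ (Fin n) → EuclideanSpace ℝ (Fin m))
    (x : EuclideanSpace ℝ (Fin n))
    (hF : ContDiffAt ℝ 2 F x) (hh : ContDiffAt ℝ 1 h (F x))
    (u : Fin (N + 1) → EuclideanSpace ℝ (Fin n))
    (W : Fin (N + 1) → ℝ) (hW : ∑ i, W i = 1)
    (Y Ytilde : Fin (N + 1) → ℝ → EuclideanSpace ℝ (Fin n))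
    (hY : ∀ i ε, Y i ε = F (x + ε • u i))
    (hYt : ∀ i ε, Ytilde i ε = F x + ε • fderiv ℝ F x (u i))
    (Z Ztilde : Fin (N + 1) → ℝ → EuclideanSpace ℝ (Fin m))
    (hZ : ∀ i ε, Z i ε = h (Y i ε))
    (hZt : ∀ i ε, Ztilde i ε = h (Ytilde i ε))
    (Yhat Ytildehat : ℝ → EuclideanSpace ℝ (Fin n))
    (hYhat : ∀ ε, Yhat ε = ∑ i, W i • Y i ε)
    (hYtildehat : ∀ ε, Ytildehat ε = ∑ i, W i • Ytilde i ε)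
    (Zhat Ztildehat : ℝ → EuclideanSpace ℝ (Fin m))
    (hZhat : ∀ ε, Zhat ε = ∑ i, W i • Z i ε)
    (hZtildehat : ∀ ε, Ztildehat ε = ∑ i, W i • Ztilde i ε)
    (PYZ PYZtilde : ℝ → Matrix (Fin n) (Fin m) ℝ)
    (hPYZ : ∀ ε, PYZ ε = ∑ i, W i •
      vecMulVec (fun j => (Y i ε - Yhat ε) j) (fun k => (Z i ε - Zhat ε) k))
    (hPYZt : ∀ ε, PYZtilde ε = ∑ i, W i •
      vecMulVec (fun j => (Ytilde i ε - Ytildehat ε) j)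
        (fun k => (Ztilde i ε - Ztildehat ε) k)) :
    (fun ε : ℝ => PYZ ε - PYZtilde ε) =o[nhds 0] (fun ε : ℝ => ε ^ 2) := by
  have hFd : HasFDerivAt F (fderiv ℝ F x) x :=
    (hF.differentiableAt two_ne_zero).hasFDerivAt
  -- first-order remainder of Y is o(ε)
  have hdY : ∀ i, (fun ε => Y i ε - Ytilde i ε) =o[nhds 0] fun ε : ℝ => ε := by
    intro i
    have hline : HasDerivAt (fun ε : ℝ => x + ε • u i) (u i) 0 := by
      simpa using ((hasDerivAt_id (0 : ℝ)).smul_const (u i)).const_add x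
    have hFd' : HasFDerivAt F (fderiv ℝ F x) ((fun ε : ℝ => x + ε • u i) 0) := by
      simpa using hFd
    have hcomp := hFd'.comp_hasDerivAt 0 hline
    have h2 := hasDerivAt_iff_isLittleO.mp hcomp
    refine h2.congr (fun ε => ?_) (fun ε => by simp)
    rw [hY i ε, hYt i ε]
    simp [Function.comp]
    abel
  have hYtsub : ∀ i ε, Ytilde i ε - F x = ε • fderiv ℝ F x (u i) := fun i ε => by
    rw [hYt]; abel
  have hYtO : ∀ i, (fun ε => Ytilde i ε - F x) =O[nhds 0] fun ε : ℝ => ε := fun i =>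
    (smul_isBigO' (fderiv ℝ F x (u i))).congr_left fun ε => (hYtsub i ε).symm
  have hYO : ∀ i, (fun ε => Y i ε - F x) =O[nhds 0] fun ε : ℝ => ε := by
    intro i
    refine ((hdY i).isBigO.add (hYtO i)).congr_left fun ε => ?_
    abel
  -- local Lipschitz bound for h
  obtain ⟨K, t, ht, hK⟩ := hh.exists_lipschitzOnWith
  have hYtend : ∀ i, Tendsto (fun ε : ℝ => Y i ε) (nhds 0) (nhds (F x)) := by
    intro i
    have hl : ContinuousAt (fun ε : ℝ => x + ε • u i) 0 := by fun_prop
    have hc : ContinuousAt (fun ε : ℝ => F (x + ε • u i)) 0 :=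
      ContinuousAt.comp (by simpa using hF.continuousAt) hl
    have := hc.tendsto
    simp only [zero_smul, add_zero] at this
    exact Tendsto.congr (fun ε => (hY i ε).symm) this
  have hYttend : ∀ i, Tendsto (fun ε : ℝ => Ytilde i ε) (nhds 0) (nhds (F x)) := by
    intro i
    have hc : Continuous fun ε : ℝ => F x + ε • fderiv ℝ F x (u i) := by fun_prop
    have := hc.continuousAt (x := (0 : ℝ)).tendsto
    simp only [zero_smul, add_zero] at this
    exact Tendsto.congr (fun ε => (hYt i ε).symm) this
  have memY : ∀ i, ∀ᶠ ε in nhds (0 : ℝ), Y i ε ∈ t := fun i =>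
    (hYtend i).eventually_mem ht
  have memYt : ∀ i, ∀ᶠ ε in nhds (0 : ℝ), Ytilde i ε ∈ t := fun i =>
    (hYttend i).eventually_mem ht
  have hFxt : F x ∈ t := mem_of_mem_nhds ht
  have hdZ : ∀ i, (fun ε => Z i ε - Ztilde i ε) =o[nhds 0] fun ε : ℝ => ε := by
    intro i
    have hO : (fun ε => Z i ε - Ztilde i ε) =O[nhds 0]
        fun ε => Y i ε - Ytilde i ε := by
      refine isBigO_iff.mpr ⟨K, ?_⟩
      filter_upwards [memY i, memYt i] with ε h1 h2
      rw [hZ, hZt, ← dist_eq_norm, ← dist_eq_norm]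
      exact hK.dist_le_mul _ h1 _ h2
    exact hO.trans_isLittleO (hdY i)
  have hZO : ∀ i, (fun ε => Z i ε - h (F x)) =O[nhds 0] fun ε : ℝ => ε := by
    intro i
    have hO : (fun ε => Z i ε - h (F x)) =O[nhds 0] fun ε => Y i ε - F x := by
      refine isBigO_iff.mpr ⟨K, ?_⟩
      filter_upwards [memY i] with ε h1
      rw [hZ, ← dist_eq_norm, ← dist_eq_norm]
      exact hK.dist_le_mul _ h1 _ hFxt
    exact hO.trans (hYO i)
  have hZtO : ∀ i, (fun ε => Ztilde i ε - h (F x)) =O[nhds 0] fun ε : ℝ => ε := by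
    intro i
    have hO : (fun ε => Ztilde i ε - h (F x)) =O[nhds 0] fun ε => Ytilde i ε - F x := by
      refine isBigO_iff.mpr ⟨K, ?_⟩
      filter_upwards [memYt i] with ε h1
      rw [hZt, ← dist_eq_norm, ← dist_eq_norm]
      exact hK.dist_le_mul _ h1 _ hFxt
    exact hO.trans (hYtO i)
  -- means
  have hYhatO : (fun ε => Yhat ε - F x) =O[nhds 0] fun ε : ℝ => ε := by
    have he : ∀ ε, Yhat ε - F x = ∑ i, W i • (Y i ε - F x) := fun ε => by
      rw [hYhat]; exact weighted_mean_sub W hW _ _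
    exact (IsBigO.sum fun i _ => ((hYO i).const_smul_left (W i))).congr_left
      fun ε => (Finset.sum_apply ε Finset.univ _).trans (he ε).symm
  have hYthatO : (fun ε => Ytildehat ε - F x) =O[nhds 0] fun ε : ℝ => ε := by
    have he : ∀ ε, Ytildehat ε - F x = ∑ i, W i • (Ytilde i ε - F x) := fun ε => by
      rw [hYtildehat]; exact weighted_mean_sub W hW _ _
    exact (IsBigO.sum fun i _ => ((hYtO i).const_smul_left (W i))).congr_left
      fun ε => (Finset.sum_apply ε Finset.univ _).trans (he ε).symm
  have hZhatO : (fun ε => Zhat ε - h (F x)) =O[nhds 0] fun ε : ℝ => ε := by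
    have he : ∀ ε, Zhat ε - h (F x) = ∑ i, W i • (Z i ε - h (F x)) := fun ε => by
      rw [hZhat]; exact weighted_mean_sub W hW _ _
    exact (IsBigO.sum fun i _ => ((hZO i).const_smul_left (W i))).congr_left
      fun ε => (Finset.sum_apply ε Finset.univ _).trans (he ε).symm
  have hZthatO : (fun ε => Ztildehat ε - h (F x)) =O[nhds 0] fun ε : ℝ => ε := by
    have he : ∀ ε, Ztildehat ε - h (F x) = ∑ i, W i • (Ztilde i ε - h (F x)) :=
      fun ε => by rw [hZtildehat]; exact weighted_mean_sub W hW _ _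
    exact (IsBigO.sum fun i _ => ((hZtO i).const_smul_left (W i))).congr_left
      fun ε => (Finset.sum_apply ε Finset.univ _).trans (he ε).symm
  have hdYhat : (fun ε => Yhat ε - Ytildehat ε) =o[nhds 0] fun ε : ℝ => ε := by
    have he : ∀ ε, Yhat ε - Ytildehat ε = ∑ i, W i • (Y i ε - Ytilde i ε) := fun ε => by
      rw [hYhat, hYtildehat]; simp [smul_sub, Finset.sum_sub_distrib]
    exact (IsLittleO.sum fun i _ => ((hdY i).const_smul_left (W i))).congr_left
      fun ε => (Finset.sum_apply ε Finset.univ _).trans (he ε).symm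
  have hdZhat : (fun ε => Zhat ε - Ztildehat ε) =o[nhds 0] fun ε : ℝ => ε := by
    have he : ∀ ε, Zhat ε - Ztildehat ε = ∑ i, W i • (Z i ε - Ztilde i ε) := fun ε => by
      rw [hZhat, hZtildehat]; simp [smul_sub, Finset.sum_sub_distrib]
    exact (IsLittleO.sum fun i _ => ((hdZ i).const_smul_left (W i))).congr_left
      fun ε => (Finset.sum_apply ε Finset.univ _).trans (he ε).symm
  -- centered quantities
  have hbO : ∀ i, (fun ε => Z i ε - Zhat ε) =O[nhds 0] fun ε : ℝ => ε := fun i =>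
    ((hZO i).sub hZhatO).congr_left fun ε => by abel
  have hatO : ∀ i, (fun ε => Ytilde i ε - Ytildehat ε) =O[nhds 0] fun ε : ℝ => ε :=
    fun i => ((hYtO i).sub hYthatO).congr_left fun ε => by abel
  have hda : ∀ i, (fun ε => (Y i ε - Yhat ε) - (Ytilde i ε - Ytildehat ε))
      =o[nhds 0] fun ε : ℝ => ε := fun i =>
    ((hdY i).sub hdYhat).congr_left fun ε => by abel
  have hdb : ∀ i, (fun ε => (Z i ε - Zhat ε) - (Ztilde i ε - Ztildehat ε))
      =o[nhds 0] fun ε : ℝ => ε := fun i =>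
    ((hdZ i).sub hdZhat).congr_left fun ε => by abel
  -- per-index little-o for the matrix difference
  have key : ∀ i : Fin (N + 1), (fun ε => W i •
      (vecMulVec (fun j => (Y i ε - Yhat ε) j) (fun k => (Z i ε - Zhat ε) k) -
       vecMulVec (fun j => (Ytilde i ε - Ytildehat ε) j)
         (fun k => (Ztilde i ε - Ztildehat ε) k))) =o[nhds 0]
      fun ε : ℝ => ε ^ 2 := by
    intro i
    have hdecomp : ∀ ε : ℝ,
        vecMulVec (fun j => (Y i ε - Yhat ε) j) (fun k => (Z i ε - Zhat ε) k) -
        vecMulVec (fun j => (Ytilde i ε - Ytildehat ε) j)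
          (fun k => (Ztilde i ε - Ztildehat ε) k)
        = vecMulVec (fun j => ((Y i ε - Yhat ε) - (Ytilde i ε - Ytildehat ε)) j)
            (fun k => (Z i ε - Zhat ε) k)
          + vecMulVec (fun j => (Ytilde i ε - Ytildehat ε) j)
            (fun k => ((Z i ε - Zhat ε) - (Ztilde i ε - Ztildehat ε)) k) := by
      intro ε
      ext j k
      simp only [Matrix.sub_apply, Matrix.add_apply, vecMulVec_apply,
        PiLp.sub_apply]
      ring
    have h1 : (fun ε => vecMulVec
        (fun j => ((Y i ε - Yhat ε) - (Ytilde i ε - Ytildehat ε)) j)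
        (fun k => (Z i ε - Zhat ε) k)) =o[nhds 0] fun ε : ℝ => ε ^ 2 := by
      refine vecMulVec_isLittleO ?_
      refine (((hda i).norm_left.mul_isBigO (hbO i).norm_left)).congr_right
        fun ε => (pow_two ε).symm
    have h2 : (fun ε => vecMulVec (fun j => (Ytilde i ε - Ytildehat ε) j)
        (fun k => ((Z i ε - Zhat ε) - (Ztilde i ε - Ztildehat ε)) k))
        =o[nhds 0] fun ε : ℝ => ε ^ 2 := by
      refine vecMulVec_isLittleO ?_
      refine (((hatO i).norm_left.mul_isLittleO (hdb i).norm_left)).congr_right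
        fun ε => (pow_two ε).symm
    refine IsLittleO.const_smul_left ?_ (W i)
    exact (h1.add h2).congr_left fun ε => (hdecomp ε).symm
  refine (IsLittleO.sum fun i (_ : i ∈ Finset.univ) => key i).congr_left fun ε => ?_
  rw [hPYZ, hPYZt]
  simp [smul_sub, Finset.sum_sub_distrib]
end
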